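/- Let d_B, m be positive integers, let G : ℝ^{d_B} → ℝ^{m} be a differentiable map that is L_h-Lipschitz and satisfies the second-order smoothness condition with constant L_G (L_h, L_G > 0), and let D : ℝ^{m} → ℝ be L_x-Lipschitz (L_x > 0). Let (γ, C) be a coordinate coding on ℝ^{d_B} and let h ∈ ℝ^{d_B} with physical approximation r(h) = Σ_{v∈C} γ_v v. Then |D(G(h)) − D(Σ_{v∈C} γ_v G(v))| ≤ L_x L_h ‖h − r(h)‖ + L_x L_G Σ_{v∈C} |γ_v| ‖v − r(h)‖². -/

import Mathlib

open scoped BigOperators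

/-- **Proposition (discriminator–generator approximation, supplementary Section A).**
If `G : ℝ^{d_B} → ℝ^m` is a differentiable `L_h`-Lipschitz map satisfying the second-order
smoothness condition with constant `L_G`, `D : ℝ^m → ℝ` is `L_x`-Lipschitz, and `(γ, C)` is a
coordinate coding with `r h = ∑ v ∈ C, γ v • v`, then
`|D (G h) − D (∑ v ∈ C, γ v • G v)| ≤ L_x L_h ‖h − r h‖ + L_x L_G ∑ v ∈ C, |γ v| ‖v − r h‖²`. -/
theorem discriminator_generator_approximation
    (dB m : ℕ) (hdB : 0 < dB) (hm : 0 < m)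
    (G : EuclideanSpace ℝ (Fin dB) → EuclideanSpace ℝ (Fin m))
    (Lh LG Lx : ℝ) (hLh : 0 < Lh) (hLG : 0 < LG) (hLx : 0 < Lx)
    (hdiff : Differentiable ℝ G)
    (hlip : ∀ x y, ‖G x - G y‖ ≤ Lh * ‖x - y‖)
    (hsmooth : ∀ x y, ‖G y - G x - fderiv ℝ G x (y - x)‖ ≤ LG * ‖x - y‖ ^ 2)
    (D : EuclideanSpace ℝ (Fin m) → ℝ)
    (hDlip : ∀ x y, |D x - D y| ≤ Lx * ‖x - y‖)
    (C : Finset (EuclideanSpace ℝ (Fin dB)))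
    (γ : EuclideanSpace ℝ (Fin dB) → ℝ)
    (hγ : ∑ v ∈ C, γ v = 1)
    (h : EuclideanSpace ℝ (Fin dB)) :
    |D (G h) - D (∑ v ∈ C, γ v • G v)| ≤
      Lx * Lh * ‖h - ∑ v ∈ C, γ v • v‖ +
        Lx * LG * ∑ v ∈ C, |γ v| * ‖v - ∑ w ∈ C, γ w • w‖ ^ 2 := by
  set r : EuclideanSpace ℝ (Fin dB) := ∑ v ∈ C, γ v • v with hr
  -- key: ∑ γ v • (v - r) = 0
  have hsum0 : ∑ v ∈ C, γ v • (v - r) = 0 := by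
    simp only [smul_sub, Finset.sum_sub_distrib, ← Finset.sum_smul, hγ, one_smul, sub_self]
    exact sub_self _
  have hder0 : ∑ v ∈ C, γ v • (fderiv ℝ G r) (v - r) = 0 := by
    have := map_sum (fderiv ℝ G r) (fun v => γ v • (v - r)) C
    rw [hsum0] at this
    simp only [map_smul] at this
    simpa using this.symm
  -- G r - ∑ γ v • G v = -∑ γ v • (G v - G r - DG r (v - r))
  have hkey : G r - ∑ v ∈ C, γ v • G v
      = -∑ v ∈ C, γ v • (G v - G r - fderiv ℝ G r (v - r)) := by
    have h1 : ∑ v ∈ C, γ v • G r = G r := by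
      rw [← Finset.sum_smul, hγ, one_smul]
    calc G r - ∑ v ∈ C, γ v • G v
        = -(∑ v ∈ C, γ v • G v - ∑ v ∈ C, γ v • G r
            - ∑ v ∈ C, γ v • (fderiv ℝ G r) (v - r)) := by
          rw [hder0, h1]; abel
      _ = -∑ v ∈ C, γ v • (G v - G r - fderiv ℝ G r (v - r)) := by
          congr 1
          rw [← Finset.sum_sub_distrib, ← Finset.sum_sub_distrib]
          exact Finset.sum_congr rfl fun v _ => by rw [smul_sub, smul_sub]
  have hnorm2 : ‖G r - ∑ v ∈ C, γ v • G v‖ ≤ LG * ∑ v ∈ C, |γ v| * ‖v - r‖ ^ 2 := by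
    rw [hkey, norm_neg, Finset.mul_sum]
    refine (norm_sum_le _ _).trans (Finset.sum_le_sum fun v _ => ?_)
    rw [norm_smul, Real.norm_eq_abs]
    calc |γ v| * ‖G v - G r - fderiv ℝ G r (v - r)‖
        ≤ |γ v| * (LG * ‖r - v‖ ^ 2) := by
          exact mul_le_mul_of_nonneg_left (hsmooth r v) (abs_nonneg _)
      _ = LG * (|γ v| * ‖v - r‖ ^ 2) := by rw [norm_sub_rev]; ring
  calc |D (G h) - D (∑ v ∈ C, γ v • G v)|
      ≤ Lx * ‖G h - ∑ v ∈ C, γ v • G v‖ := hDlip _ _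
    _ ≤ Lx * (‖G h - G r‖ + ‖G r - ∑ v ∈ C, γ v • G v‖) := by
        exact mul_le_mul_of_nonneg_left (norm_sub_le_norm_sub_add_norm_sub _ _ _) hLx.le
    _ ≤ Lx * (Lh * ‖h - r‖ + LG * ∑ v ∈ C, |γ v| * ‖v - r‖ ^ 2) := by
        refine mul_le_mul_of_nonneg_left (add_le_add (hlip h r) hnorm2) hLx.le
    _ = Lx * Lh * ‖h - r‖ + Lx * LG * ∑ v ∈ C, |γ v| * ‖v - r‖ ^ 2 := by ring
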